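/- arXiv:1012.3182 — 2 statements merged into one kernel-verified Lean document; each statement's English description precedes it below -/
import Mathlib

section
/- Let A = aᵀ where a = (a₁, …, a_n) ∈ ℤⁿ_{>0} with gcd(a₁,…,a_n) = 1, and let δ > 0. If b ∈ ℤ satisfies b ≥ 2^{(n−1)/2−1}(1+δ) p(1,n) Σ_{i=1}^n ‖a[i]‖ a_i, where p(1,n) = ((n−1)n/2)^{1/2} and a[i] is a with its i-th coordinate deleted, then the knapsack polytope {x ∈ ℝⁿ_{≥0} : aᵀx = b} contains an integer point. -/
noncomputable section

open scoped BigOperators RealInnerProductSpace Pointwise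

instance (k : ℕ) : WellFoundedLT (Fin k) := inferInstance

/-- Pack a plain vector into `EuclideanSpace`. -/
def toE {n : ℕ} (x : Fin n → ℝ) : EuclideanSpace ℝ (Fin n) := (WithLp.equiv 2 _).symm x

/-- `det(L)` for the lattice with basis `b`: the square root of the Gram determinant,
i.e. the `k`-volume of the fundamental parallelepiped. -/
def latticeDet {n k : ℕ} (b : Fin k → EuclideanSpace ℝ (Fin n)) : ℝ :=
  Real.sqrt (Matrix.det (Matrix.of fun i j : Fin k => (⟪b i, b j⟫ : ℝ)))

/-- `λ_i(B, L)`: the `i`-th successive minimum (1-based) of the unit Euclidean ball with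
respect to the lattice generated over `ℤ` by `b`. -/
def succMin {n k : ℕ} (b : Fin k → EuclideanSpace ℝ (Fin n)) (i : ℕ) : ℝ :=
  sInf {lam : ℝ | 0 < lam ∧ ∃ v : Fin i → EuclideanSpace ℝ (Fin n),
    (∀ j, v j ∈ Submodule.span ℤ (Set.range b)) ∧ LinearIndependent ℝ v ∧ ∀ j, ‖v j‖ ≤ lam}

/-- `λ_i(K, L)` for a general `0`-symmetric convex body `K`. -/
def succMinSet {n k : ℕ} (K : Set (EuclideanSpace ℝ (Fin n)))
    (b : Fin k → EuclideanSpace ℝ (Fin n)) (i : ℕ) : ℝ :=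
  sInf {lam : ℝ | 0 < lam ∧ ∃ v : Fin i → EuclideanSpace ℝ (Fin n),
    (∀ j, v j ∈ Submodule.span ℤ (Set.range b)) ∧ LinearIndependent ℝ v ∧ ∀ j, v j ∈ lam • K}

/-- Gram–Schmidt coefficients `μ_{ij} = ⟪b_i, b̂_j⟫ / ‖b̂_j‖²`. -/
def gsMu {n k : ℕ} (b : Fin k → EuclideanSpace ℝ (Fin n)) (i j : Fin k) : ℝ :=
  ⟪b i, InnerProductSpace.gramSchmidt ℝ b j⟫ / ‖InnerProductSpace.gramSchmidt ℝ b j‖ ^ 2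

/-- A basis is LLL-reduced if it is size-reduced and satisfies the Lovász condition. -/
def IsLLLReduced {n k : ℕ} (b : Fin k → EuclideanSpace ℝ (Fin n)) : Prop :=
  (∀ i j : Fin k, j < i → |gsMu b i j| ≤ 1 / 2) ∧
  (∀ i j : Fin k, (j : ℕ) + 1 = (i : ℕ) →
    3 / 4 * ‖InnerProductSpace.gramSchmidt ℝ b j‖ ^ 2 ≤
      ‖InnerProductSpace.gramSchmidt ℝ b i‖ ^ 2 + gsMu b i j ^ 2 * ‖InnerProductSpace.gramSchmidt ℝ b j‖ ^ 2)

/-- The Hermite constant `γ_k`: the supremum over full-rank lattices in `ℝ^k` of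
`λ₁(B,L)² / (det L)^{2/k}`. -/
def hermiteConstant (k : ℕ) : ℝ :=
  sSup {r : ℝ | ∃ b : Fin k → EuclideanSpace ℝ (Fin k), LinearIndependent ℝ b ∧
    r = succMin b 1 ^ 2 / latticeDet b ^ ((2 : ℝ) / k)}

/-- `x ∈ ℤⁿ`. -/
def IsIntegerVec {n : ℕ} (x : EuclideanSpace ℝ (Fin n)) : Prop :=
  ∀ j, ∃ z : ℤ, x j = (z : ℝ)

/-- The greatest common divisor of all `m × m` minors of an `m × n` integer matrix. -/
def minorGcd {m n : ℕ} (A : Matrix (Fin m) (Fin n) ℤ) : ℤ :=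
  Finset.gcd (Finset.univ.filter fun s : Finset (Fin n) => s.card = m)
    fun s => if h : s.card = m then
      (A.submatrix id fun j => ((s.orderIsoOfFin h) j : Fin n)).det else 0

/-- `c` is a `ℤ`-basis of the lattice `L_A^⊥ = {x ∈ ℤⁿ : A x = 0}`. -/
def IsKernelZBasis {m n k : ℕ} (A : Matrix (Fin m) (Fin n) ℤ)
    (c : Fin k → EuclideanSpace ℝ (Fin n)) : Prop :=
  LinearIndependent ℝ c ∧ (∀ i, IsIntegerVec (c i)) ∧
  (∀ i, (A.map (Int.cast : ℤ → ℝ)).mulVec (fun j => c i j) = 0) ∧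
  (∀ x : Fin n → ℤ, A.mulVec x = 0 →
    toE (fun j => (x j : ℝ)) ∈ Submodule.span ℤ (Set.range c))

/-- The cone `C` generated by the columns of `A`. -/
def colCone {m n : ℕ} (A : Matrix (Fin m) (Fin n) ℤ) : Set (Fin m → ℝ) :=
  {y | ∃ μ : Fin n → ℝ, (∀ i, 0 ≤ μ i) ∧ y = ∑ i, μ i • fun r => (A r i : ℝ)}

/-- `v = v₁ + ⋯ + v_n`, the sum of the columns of `A` (as a real vector). -/
def colSum {m n : ℕ} (A : Matrix (Fin m) (Fin n) ℤ) : Fin m → ℝ :=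
  fun r => ∑ i, (A r i : ℝ)


lemma bezout_finset {ι : Type*} [DecidableEq ι] (s : Finset ι) (f : ι → ℤ) :
    ∃ y : ι → ℤ, ∑ i ∈ s, f i * y i = s.gcd f := by
  classical
  induction s using Finset.induction with
  | empty => exact ⟨0, by simp⟩
  | insert c s h ih =>
    obtain ⟨y, hy⟩ := ih
    refine ⟨fun i => if i = c then Int.gcdA (f c) (s.gcd f)
      else y i * Int.gcdB (f c) (s.gcd f), ?_⟩
    rw [Finset.sum_insert h, Finset.gcd_insert]
    have hb : (Int.gcd (f c) (s.gcd f) : ℤ)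
        = f c * Int.gcdA (f c) (s.gcd f) + (s.gcd f) * Int.gcdB (f c) (s.gcd f) :=
      Int.gcd_eq_gcd_ab _ _
    have hcoe : GCDMonoid.gcd (f c) (s.gcd f) = (Int.gcd (f c) (s.gcd f) : ℤ) := by
      rw [Int.coe_gcd]
    rw [hcoe, hb, ← hy, Finset.sum_mul]
    simp only [if_pos rfl]
    congr 1
    refine Finset.sum_congr rfl fun i hi => ?_
    rw [if_neg (by rintro rfl; exact h hi)]
    ring

lemma rep_lemma {n : ℕ} (a : Fin n → ℤ) (ha : ∀ i, 0 < a i)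
    (hgcd : Finset.univ.gcd a = 1) (k : Fin n) (b : ℤ)
    (hb : (a k - 1) * ∑ i ∈ Finset.univ.erase k, a i ≤ b) :
    ∃ x : Fin n → ℤ, (∀ i, 0 ≤ x i) ∧ ∑ i, a i * x i = b := by
  classical
  obtain ⟨y, hy⟩ := bezout_finset Finset.univ a
  rw [hgcd] at hy
  have hm0 : 0 < a k := ha k
  set m : ℤ := a k with hm
  set S : ℤ := ∑ i ∈ Finset.univ.erase k, a i * ((b * y i) % m) with hS
  set T : ℤ := ∑ i ∈ Finset.univ.erase k, a i with hT
  have hTnn : 0 ≤ T := Finset.sum_nonneg fun i _ => (ha i).le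
  have hsum1 : a k * y k + ∑ i ∈ Finset.univ.erase k, a i * y i = 1 :=
    (Finset.add_sum_erase Finset.univ (fun i => a i * y i) (Finset.mem_univ k)).trans hy
  have h2 : m ∣ b - ∑ i ∈ Finset.univ.erase k, a i * (b * y i) := by
    have h5 : ∑ i ∈ Finset.univ.erase k, a i * (b * y i)
        = b * ∑ i ∈ Finset.univ.erase k, a i * y i := by
      rw [Finset.mul_sum]; exact Finset.sum_congr rfl fun i _ => by ring
    have h3 : (∑ i ∈ Finset.univ.erase k, a i * y i) = 1 - m * y k := by
      rw [hm]; linarith [hsum1]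
    rw [h5, h3]
    exact ⟨b * y k, by ring⟩
  have h1 : m ∣ S - ∑ i ∈ Finset.univ.erase k, a i * (b * y i) := by
    rw [hS, ← Finset.sum_sub_distrib]
    refine Finset.dvd_sum fun i _ => ?_
    have h6 : a i * (b * y i % m) - a i * (b * y i)
        = m * (-(a i * (b * y i / m))) := by
      rw [Int.emod_def]; ring
    exact ⟨_, h6⟩
  have hdvd : m ∣ b - S := by
    have h7 := dvd_sub h2 h1
    have h8 : (b - ∑ i ∈ Finset.univ.erase k, a i * (b * y i))
        - (S - ∑ i ∈ Finset.univ.erase k, a i * (b * y i)) = b - S := by ring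
    rwa [h8] at h7
  have hmodub : ∀ i : Fin n, (b * y i) % m ≤ m - 1 := fun i => by
    have := Int.emod_lt_of_pos (b * y i) hm0; omega
  have hmodlb : ∀ i : Fin n, 0 ≤ (b * y i) % m := fun i =>
    Int.emod_nonneg _ (ne_of_gt hm0)
  have hSle : S ≤ b := by
    have h9 : S ≤ (m - 1) * T := by
      rw [hS, hT, Finset.mul_sum]
      refine Finset.sum_le_sum fun i _ => ?_
      calc a i * (b * y i % m) ≤ a i * (m - 1) :=
            mul_le_mul_of_nonneg_left (hmodub i) (ha i).le
        _ = (m - 1) * a i := mul_comm _ _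
    exact h9.trans hb
  have hSnn : 0 ≤ S :=
    Finset.sum_nonneg fun i _ => mul_nonneg (ha i).le (hmodlb i)
  set x : Fin n → ℤ := fun i => if i = k then (b - S) / m else (b * y i) % m with hx
  have hxk : x k = (b - S) / m := if_pos rfl
  have hxi : ∀ i, i ≠ k → x i = (b * y i) % m := fun i h => if_neg h
  refine ⟨x, fun i => ?_, ?_⟩
  · by_cases hik : i = k
    · subst hik; rw [hxk]
      exact Int.ediv_nonneg (by omega) hm0.le
    · rw [hxi i hik]; exact hmodlb i
  · have e2 : ∑ i : Fin n, a i * x i = a k * x k + ∑ i ∈ Finset.univ.erase k, a i * x i :=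
      (Finset.add_sum_erase Finset.univ (fun i => a i * x i) (Finset.mem_univ k)).symm
    have h10 : ∑ i ∈ Finset.univ.erase k, a i * x i = S := by
      rw [hS]
      refine Finset.sum_congr rfl fun i hi => ?_
      rw [hxi i (Finset.ne_of_mem_erase hi)]
    rw [e2, h10, hxk, ← hm, Int.mul_ediv_cancel' hdvd]
    ring

/-- Theorem 4, condition (10): if
`b ≥ 2^{(n−1)/2−1}(1+δ) p(1,n) ∑ ‖a[i]‖ a_i`, the knapsack `{x ≥ 0 : aᵀx = b}` contains an
integer point. -/
theorem knapsack_m_one_feasible {n : ℕ} (a : Fin n → ℤ) (ha : ∀ i, 0 < a i)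
    (hgcd : Finset.univ.gcd a = 1) (δ : ℝ) (hδ : 0 < δ) (b : ℤ)
    (hb : (2 : ℝ) ^ (((n : ℝ) - 1) / 2 - 1) * (1 + δ) * Real.sqrt (((n : ℝ) - 1) * n / 2) *
        ∑ i, Real.sqrt (∑ j ∈ Finset.univ.erase i, (a j : ℝ) ^ 2) * (a i : ℝ) ≤ (b : ℝ)) :
    ∃ x : Fin n → ℤ, (∀ i, 0 ≤ x i) ∧ ∑ i, a i * x i = b := by
  classical
  rcases Nat.eq_zero_or_pos n with rfl | hn
  · simp at hgcd
  have haR : ∀ i, (0:ℝ) < (a i : ℝ) := fun i => by exact_mod_cast ha i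
  rcases lt_or_ge n 3 with h3 | h3
  · interval_cases n
    · -- n = 1
      refine rep_lemma a ha hgcd 0 b ?_
      have hT0 : (Finset.univ.erase (0 : Fin 1)) = ∅ := by decide
      have hb0 : (0:ℝ) ≤ (b:ℝ) := by
        refine le_trans (le_of_eq ?_) hb
        rw [Fin.sum_univ_one, hT0]
        simp
      have : (0:ℤ) ≤ b := by exact_mod_cast hb0
      rw [hT0]
      simpa using this
    · -- n = 2
      refine rep_lemma a ha hgcd 0 b ?_
      rw [← Int.cast_le (R := ℝ)]
      push_cast
      refine le_trans ?_ hb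
      push_cast
      have e0 : (Finset.univ.erase (0 : Fin 2)) = {1} := by decide
      have e1 : (Finset.univ.erase (1 : Fin 2)) = {0} := by decide
      rw [Fin.sum_univ_two, e0, e1, Finset.sum_singleton, Finset.sum_singleton,
        Finset.sum_singleton, Real.sqrt_sq (haR 1).le, Real.sqrt_sq (haR 0).le]
      have hexp : ((2:ℝ) - 1) / 2 - 1 = -(1/2 : ℝ) := by norm_num
      have hsq1 : Real.sqrt (((2:ℝ) - 1) * 2 / 2) = 1 := by norm_num
      have hpow : (1/2 : ℝ) ≤ (2:ℝ) ^ (((2:ℝ) - 1) / 2 - 1) := by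
        rw [hexp]
        have h1 : (2:ℝ) ^ (-(1:ℝ)) ≤ (2:ℝ) ^ (-(1/2:ℝ)) :=
          Real.rpow_le_rpow_of_exponent_le (by norm_num) (by norm_num)
        rw [Real.rpow_neg_one] at h1
        linarith
      have h0 := haR 0
      have h1 := haR 1
      rw [hsq1]
      have ha1 : (1:ℝ) ≤ (a 0 : ℝ) := by exact_mod_cast ha 0
      nlinarith [mul_pos h0 h1, Real.rpow_nonneg (by norm_num : (0:ℝ) ≤ 2) (((2:ℝ)-1)/2-1),
        mul_le_mul_of_nonneg_right hpow (mul_pos h0 h1).le]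
  · -- n ≥ 3
    set k : Fin n := ⟨0, hn⟩ with hk
    refine rep_lemma a ha hgcd k b ?_
    rw [← Int.cast_le (R := ℝ)]
    push_cast
    refine le_trans ?_ hb
    set Sr : ℝ := ∑ i, Real.sqrt (∑ j ∈ Finset.univ.erase i, (a j : ℝ) ^ 2) * (a i : ℝ) with hSr
    have hSrnn : 0 ≤ Sr :=
      Finset.sum_nonneg fun i _ => mul_nonneg (Real.sqrt_nonneg _) (haR i).le
    have hTrnn : (0:ℝ) ≤ ∑ i ∈ Finset.univ.erase k, (a i : ℝ) :=
      Finset.sum_nonneg fun i _ => (haR i).le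
    have hsqrt : ∀ i : Fin n, i ≠ k →
        (a k : ℝ) ≤ Real.sqrt (∑ j ∈ Finset.univ.erase i, (a j : ℝ) ^ 2) := by
      intro i hik
      have hk_mem : k ∈ Finset.univ.erase i :=
        Finset.mem_erase.mpr ⟨fun h => hik h.symm, Finset.mem_univ k⟩
      have h1 : (a k : ℝ) ^ 2 ≤ ∑ j ∈ Finset.univ.erase i, (a j : ℝ) ^ 2 :=
        Finset.single_le_sum (f := fun j => (a j : ℝ) ^ 2) (fun j _ => sq_nonneg _) hk_mem
      calc (a k : ℝ) = Real.sqrt ((a k : ℝ) ^ 2) := (Real.sqrt_sq (haR k).le).symm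
        _ ≤ _ := Real.sqrt_le_sqrt h1
    have hmain : (a k : ℝ) * ∑ i ∈ Finset.univ.erase k, (a i : ℝ) ≤ Sr := by
      rw [Finset.mul_sum]
      calc ∑ i ∈ Finset.univ.erase k, (a k : ℝ) * (a i : ℝ)
          ≤ ∑ i ∈ Finset.univ.erase k,
              Real.sqrt (∑ j ∈ Finset.univ.erase i, (a j : ℝ) ^ 2) * (a i : ℝ) :=
            Finset.sum_le_sum fun i hi =>
              mul_le_mul_of_nonneg_right (hsqrt i (Finset.ne_of_mem_erase hi)) (haR i).le
        _ ≤ Sr :=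
            Finset.sum_le_sum_of_subset_of_nonneg (Finset.subset_univ _)
              (fun i _ _ => mul_nonneg (Real.sqrt_nonneg _) (haR i).le)
    have hC1 : (1:ℝ) ≤ 2 ^ (((n : ℝ) - 1) / 2 - 1) * (1 + δ) *
        Real.sqrt (((n : ℝ) - 1) * n / 2) := by
      have hn3 : (3:ℝ) ≤ (n:ℝ) := by exact_mod_cast h3
      have h2e : (1:ℝ) ≤ (2:ℝ) ^ (((n : ℝ) - 1) / 2 - 1) := by
        have := Real.rpow_le_rpow_of_exponent_le (by norm_num : (1:ℝ) ≤ 2)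
          (by linarith : (0:ℝ) ≤ ((n : ℝ) - 1) / 2 - 1)
        rwa [Real.rpow_zero] at this
      have hsq : (1:ℝ) ≤ Real.sqrt (((n : ℝ) - 1) * n / 2) := by
        have h5 : Real.sqrt 1 ≤ Real.sqrt (((n : ℝ) - 1) * n / 2) :=
          Real.sqrt_le_sqrt (by nlinarith)
        rwa [Real.sqrt_one] at h5
      have hd : (1:ℝ) ≤ 1 + δ := by linarith
      have h12 : (1:ℝ) ≤ 2 ^ (((n : ℝ) - 1) / 2 - 1) * (1 + δ) := by
        have := mul_le_mul h2e hd zero_le_one (le_trans zero_le_one h2e)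
        linarith
      have := mul_le_mul h12 hsq zero_le_one (le_trans zero_le_one h12)
      linarith
    calc ((a k : ℝ) - 1) * ∑ i ∈ Finset.univ.erase k, (a i : ℝ)
        ≤ (a k : ℝ) * ∑ i ∈ Finset.univ.erase k, (a i : ℝ) :=
          mul_le_mul_of_nonneg_right (by linarith [haR k]) hTrnn
      _ ≤ Sr := hmain
      _ ≤ _ := le_mul_of_one_le_left hSrnn hC1

end
end

section
/- Let a ∈ ℤⁿ with gcd(a₁,…,a_n) = 1. Then the lattice L⊥ = {x ∈ ℤⁿ : aᵀx = 0} has rank n−1 and determinant det(L⊥) = ‖a‖ (the Euclidean norm of a). -/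
noncomputable section

open scoped BigOperators RealInnerProductSpace Pointwise

/-- `c` is a `ℤ`-basis of the lattice `{x ∈ ℤⁿ : aᵀx = 0}`. -/
def IsOrthKernelZBasis {n k : ℕ} (a : Fin n → ℤ)
    (c : Fin k → EuclideanSpace ℝ (Fin n)) : Prop :=
  LinearIndependent ℝ c ∧ (∀ i, IsIntegerVec (c i)) ∧
  (∀ i, ∑ j, (a j : ℝ) * c i j = 0) ∧
  (∀ x : Fin n → ℤ, (∑ j, a j * x j = 0) →
    toE (fun j => (x j : ℝ)) ∈ Submodule.span ℤ (Set.range c))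


open Matrix in
private lemma finset_gcd_bezout {ι : Type*} (s : Finset ι) (f : ι → ℤ) :
    ∃ g : ι → ℤ, ∑ i ∈ s, f i * g i = s.gcd f := by
  classical
  induction s using Finset.induction with
  | empty => exact ⟨0, by simp⟩
  | @insert a s ha ih =>
    obtain ⟨g, hg⟩ := ih
    obtain ⟨x, y, hxy⟩ := exists_gcd_eq_mul_add_mul (f a) (s.gcd f)
    refine ⟨fun i => if i = a then x else g i * y, ?_⟩
    rw [Finset.gcd_insert, hxy, Finset.sum_insert ha]
    simp only [if_pos rfl]
    congr 1
    rw [← hg, Finset.sum_mul]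
    refine Finset.sum_congr rfl fun i hi => ?_
    rw [if_neg (by rintro rfl; exact ha hi)]
    ring


open Matrix in
private lemma castE_linear (n : ℕ) :
    ∃ ψ : (Fin n → ℤ) →ₗ[ℤ] EuclideanSpace ℝ (Fin n),
      ∀ y : Fin n → ℤ, ψ y = toE (fun j => (y j : ℝ)) := by
  refine ⟨{ toFun := fun y => toE (fun j => (y j : ℝ)), map_add' := ?_, map_smul' := ?_ }, fun _ => rfl⟩
  · intro x y
    ext j
    simp [toE, WithLp.equiv_symm_apply, PiLp.toLp_apply]
  · intro z y
    ext j
    simp only [toE, WithLp.equiv_symm_apply, PiLp.toLp_apply, PiLp.smul_apply, Pi.smul_apply,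
      smul_eq_mul, zsmul_eq_mul, RingHom.id_apply]
    push_cast
    ring

open Matrix in
private lemma gram_det_invariant {E : Type*} [NormedAddCommGroup E] [InnerProductSpace ℝ E]
    {m : ℕ} (v w : Fin m → E)
    (hv : LinearIndependent ℝ v)
    (hvw : ∀ i, v i ∈ Submodule.span ℤ (Set.range w))
    (hwv : ∀ i, w i ∈ Submodule.span ℤ (Set.range v)) :
    (Matrix.of fun i j => (⟪v i, v j⟫ : ℝ)).det = (Matrix.of fun i j => (⟪w i, w j⟫ : ℝ)).det := by
  classical
  choose T hT using fun i => (Submodule.mem_span_range_iff_exists_fun ℤ).mp (hvw i)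
  choose S hS using fun i => (Submodule.mem_span_range_iff_exists_fun ℤ).mp (hwv i)
  -- real versions
  have hTr : ∀ i, ∑ k, (T i k : ℝ) • w k = v i := by
    intro i
    rw [← hT i]
    exact Finset.sum_congr rfl fun k _ => Int.cast_smul_eq_zsmul ℝ _ _
  have hSr : ∀ i, ∑ k, (S i k : ℝ) • v k = w i := by
    intro i
    rw [← hS i]
    exact Finset.sum_congr rfl fun k _ => Int.cast_smul_eq_zsmul ℝ _ _
  set Tm : Matrix (Fin m) (Fin m) ℤ := Matrix.of T with hTm
  set Sm : Matrix (Fin m) (Fin m) ℤ := Matrix.of S with hSm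
  have hTS : Tm * Sm = 1 := by
    ext i j
    have key : ∑ l, (((Tm * Sm) i l : ℤ) : ℝ) • v l - ∑ l, ((1 : Matrix (Fin m) (Fin m) ℤ) i l : ℝ) • v l = 0 := by
      have h1 : ∑ l, (((Tm * Sm) i l : ℤ) : ℝ) • v l = v i := by
        have : ∑ l, (((Tm * Sm) i l : ℤ) : ℝ) • v l
            = ∑ k, (T i k : ℝ) • (∑ l, (S k l : ℝ) • v l) := by
          simp only [Matrix.mul_apply, hTm, hSm, Matrix.of_apply, Int.cast_sum, Int.cast_mul,
            Finset.sum_smul, smul_smul, Finset.smul_sum]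
          rw [Finset.sum_comm]
        rw [this]
        calc ∑ k, (T i k : ℝ) • (∑ l, (S k l : ℝ) • v l) = ∑ k, (T i k : ℝ) • w k := by
              exact Finset.sum_congr rfl fun k _ => by rw [hSr k]
          _ = v i := hTr i
      have h2 : ∑ l, ((1 : Matrix (Fin m) (Fin m) ℤ) i l : ℝ) • v l = v i := by
        simp [Matrix.one_apply, Finset.sum_ite_eq']
      rw [h1, h2, sub_self]
    rw [← Finset.sum_sub_distrib] at key
    have key2 := Fintype.linearIndependent_iff.mp hv
      (fun l => (((Tm * Sm) i l : ℤ) : ℝ) - ((1 : Matrix (Fin m) (Fin m) ℤ) i l : ℝ)) (by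
        simpa [sub_smul] using key) j
    have : (((Tm * Sm) i j : ℤ) : ℝ) = ((1 : Matrix (Fin m) (Fin m) ℤ) i j : ℝ) := by linarith
    exact_mod_cast this
  -- determinant of T is a unit
  have hdet : Tm.det * Sm.det = 1 := by rw [← Matrix.det_mul, hTS, Matrix.det_one]
  have hdetT : Tm.det = 1 ∨ Tm.det = -1 := Int.isUnit_iff.mp (IsUnit.of_mul_eq_one _ hdet)
  -- Gram relation
  set Tr : Matrix (Fin m) (Fin m) ℝ := Tm.map (Int.cast) with hTrm
  have hGram : (Matrix.of fun i j => (⟪v i, v j⟫ : ℝ))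
      = Tr * (Matrix.of fun i j => (⟪w i, w j⟫ : ℝ)) * Trᵀ := by
    ext i j
    have hinner : (⟪v i, v j⟫ : ℝ) = ∑ k, ∑ l, (T i k : ℝ) * ((T j l : ℝ) * ⟪w k, w l⟫) := by
      rw [← hTr i, ← hTr j, sum_inner]
      refine Finset.sum_congr rfl fun k _ => ?_
      rw [real_inner_smul_left, inner_sum, Finset.mul_sum]
      refine Finset.sum_congr rfl fun l _ => ?_
      rw [real_inner_smul_right]
    simp only [Matrix.of_apply, Matrix.mul_apply, Matrix.transpose_apply, hTrm, Matrix.map_apply]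
    rw [hinner, Finset.sum_comm]
    refine Finset.sum_congr rfl fun l _ => ?_
    rw [Finset.sum_mul]
    refine Finset.sum_congr rfl fun k _ => ?_
    simp only [hTm, Matrix.of_apply]
    ring
  rw [hGram, Matrix.det_mul, Matrix.det_mul, Matrix.det_transpose]
  have hTrdet : Tr.det = (Tm.det : ℝ) := (RingHom.map_det (Int.castRingHom ℝ) Tm).symm
  rcases hdetT with h | h <;> rw [hTrdet, h] <;> push_cast <;> try ring

open Matrix in
private lemma core {m : ℕ} (a : Fin (m + 1) → ℤ) (hgcd : Finset.univ.gcd a = 1) :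
    ∃ b : Fin m → (Fin (m + 1) → ℤ),
      LinearIndependent ℝ (fun i : Fin m => fun j => ((b i j : ℝ))) ∧
      (∀ i, ∑ j, a j * b i j = 0) ∧
      (∀ x : Fin (m + 1) → ℤ, (∑ j, a j * x j = 0) → x ∈ Submodule.span ℤ (Set.range b)) ∧
      (Matrix.of fun i j : Fin m => ∑ k, (b i k : ℝ) * (b j k : ℝ)).det = ∑ j, (a j : ℝ) ^ 2 := by
  classical
  let φ : (Fin (m + 1) → ℤ) →ₗ[ℤ] ℤ := ∑ j, a j • LinearMap.proj j
  have φ_apply : ∀ x : Fin (m + 1) → ℤ, φ x = ∑ j, a j * x j := by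
    intro x
    simp [φ, LinearMap.sum_apply, LinearMap.smul_apply, LinearMap.proj_apply, smul_eq_mul]
  obtain ⟨z, hz⟩ := finset_gcd_bezout (Finset.univ : Finset (Fin (m + 1))) a
  have hφz : φ z = 1 := by rw [φ_apply, hz, hgcd]
  let σ : ℤ →ₗ[ℤ] (Fin (m + 1) → ℤ) := LinearMap.toSpanSingleton ℤ _ z
  have hφσ : ∀ t : ℤ, φ (σ t) = t := by
    intro t
    have : σ t = t • z := rfl
    rw [this, _root_.map_smul, hφz, smul_eq_mul, mul_one]
  have hσinj : Function.Injective σ := by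
    intro s t h
    have := congrArg φ h
    rwa [hφσ, hφσ] at this
  set K := LinearMap.ker φ with hK
  have hcompl : IsCompl K (LinearMap.range σ) := by
    constructor
    · rw [Submodule.disjoint_def]
      rintro x hxK ⟨t, rfl⟩
      have h0 := LinearMap.mem_ker.mp hxK
      rw [hφσ] at h0
      rw [h0, map_zero]
    · rw [codisjoint_iff_le_sup]
      intro x _
      have h1 : x - σ (φ x) ∈ K := by
        rw [hK, LinearMap.mem_ker, map_sub, hφσ, sub_self]
      have h2 : x = (x - σ (φ x)) + σ (φ x) := by ring
      rw [h2]
      exact Submodule.add_mem_sup h1 ⟨φ x, rfl⟩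
  obtain ⟨k, bK⟩ := Submodule.basisOfPid (Pi.basisFun ℤ (Fin (m + 1))) K
  let eσ : ℤ ≃ₗ[ℤ] LinearMap.range σ := LinearEquiv.ofInjective σ hσinj
  let bR : Module.Basis (Fin 1) ℤ (LinearMap.range σ) := (Module.Basis.singleton (Fin 1) ℤ).map eσ
  let e := Submodule.prodEquivOfIsCompl K (LinearMap.range σ) hcompl
  let B0 : Module.Basis (Fin k ⊕ Fin 1) ℤ (Fin (m + 1) → ℤ) := (bK.prod bR).map e
  have hk : k = m := by
    have h1 := Module.finrank_eq_card_basis B0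
    rw [Module.finrank_fintype_fun_eq_card] at h1
    simp [Fintype.card_sum] at h1
    omega
  let B : Module.Basis (Fin m ⊕ Fin 1) ℤ (Fin (m + 1) → ℤ) :=
    B0.reindex (Equiv.sumCongr (finCongr hk) (Equiv.refl (Fin 1)))
  have hB0inl : ∀ i' : Fin k, B0 (Sum.inl i') = (bK i' : Fin (m + 1) → ℤ) := by
    intro i'
    rw [Module.Basis.map_apply]
    have h1 : (bK.prod bR) (Sum.inl i') = (bK i', 0) :=
      Prod.ext (Module.Basis.prod_apply_inl_fst bK bR i') (Module.Basis.prod_apply_inl_snd bK bR i')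
    rw [h1, Submodule.coe_prodEquivOfIsCompl']
    simp
  have hBinl : ∀ i : Fin m, B (Sum.inl i) = (bK (Fin.cast hk.symm i) : Fin (m + 1) → ℤ) := by
    intro i
    rw [Module.Basis.reindex_apply]
    have : (Equiv.sumCongr (finCongr hk) (Equiv.refl (Fin 1))).symm (Sum.inl i)
        = Sum.inl (Fin.cast hk.symm i) := rfl
    rw [this, hB0inl]
  have hBinr : ∀ i1 : Fin 1, B (Sum.inr i1) = z := by
    intro i1
    rw [Module.Basis.reindex_apply]
    have h0 : (Equiv.sumCongr (finCongr hk) (Equiv.refl (Fin 1))).symm (Sum.inr i1)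
        = Sum.inr i1 := rfl
    rw [h0, Module.Basis.map_apply]
    have h1 : (bK.prod bR) (Sum.inr i1) = (0, bR i1) :=
      Prod.ext (Module.Basis.prod_apply_inr_fst bK bR i1) (Module.Basis.prod_apply_inr_snd bK bR i1)
    rw [h1, Submodule.coe_prodEquivOfIsCompl']
    have h2 : (bR i1 : Fin (m + 1) → ℤ) = σ 1 := by
      simp [bR, eσ, Module.Basis.map_apply, Module.Basis.singleton_apply, LinearEquiv.ofInjective_apply]
    have h3 : σ 1 = z := by
      show (1 : ℤ) • z = z
      simp
    simp [h2, h3]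
  have hbker : ∀ i : Fin m, ∑ j, a j * B (Sum.inl i) j = 0 := by
    intro i
    have h1 : (B (Sum.inl i)) ∈ K := by rw [hBinl]; exact (bK _).2
    have h2 := LinearMap.mem_ker.mp h1
    rwa [φ_apply] at h2
  let Bfin : Module.Basis (Fin (m + 1)) ℤ (Fin (m + 1) → ℤ) := B.reindex finSumFinEquiv
  let W : Matrix (Fin (m + 1)) (Fin (m + 1)) ℤ := Matrix.of fun r j => Bfin r j
  have hWdet : IsUnit W.det := by
    have h1 := (Pi.basisFun ℤ (Fin (m + 1))).isUnit_det Bfin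
    rw [Module.Basis.det_apply] at h1
    have h2 : (Pi.basisFun ℤ (Fin (m + 1))).toMatrix ⇑Bfin = Wᵀ := by
      ext i j
      rw [Module.Basis.toMatrix_apply, Pi.basisFun_repr]
      rfl
    rwa [h2, Matrix.det_transpose] at h1
  have hWdet2 : W.det = 1 ∨ W.det = -1 := Int.isUnit_iff.mp hWdet
  let Wr : Matrix (Fin (m + 1)) (Fin (m + 1)) ℝ := W.map Int.cast
  have hWrdet : Wr.det = (W.det : ℝ) := (RingHom.map_det (Int.castRingHom ℝ) W).symm
  have hWrunit : IsUnit Wr := by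
    rw [Matrix.isUnit_iff_isUnit_det, hWrdet]
    rcases hWdet2 with h | h <;> rw [h] <;> norm_num
  have hrows : LinearIndependent ℝ (fun r => Wr r) :=
    Matrix.linearIndependent_rows_iff_isUnit.mpr hWrunit
  have hli : LinearIndependent ℝ (fun i : Fin m => fun j => ((B (Sum.inl i) j : ℝ))) := by
    have h1 := hrows.comp (fun i : Fin m => finSumFinEquiv (Sum.inl i))
      (finSumFinEquiv.injective.comp Sum.inl_injective)
    have h2 : (fun i : Fin m => fun j => ((B (Sum.inl i) j : ℝ)))
        = fun i : Fin m => Wr (finSumFinEquiv (Sum.inl i)) := by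
      funext i j
      simp [Wr, W, Bfin, Module.Basis.reindex_apply]
    rwa [h2]
  have harepr : ∑ i : Fin m, B.repr a (Sum.inl i) • B (Sum.inl i)
      + B.repr a (Sum.inr 0) • z = a := by
    have h0 := B.sum_repr a
    rw [Fintype.sum_sum_type] at h0
    have h1 : ∑ i1 : Fin 1, B.repr a (Sum.inr i1) • B (Sum.inr i1)
        = B.repr a (Sum.inr 0) • z := by
      rw [Fin.sum_univ_one, hBinr]
    rwa [h1] at h0
  have hcoef : B.repr a (Sum.inr 0) = φ a := by
    have h1 := congrArg φ harepr
    rw [map_add, map_sum] at h1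
    simp only [LinearMap.map_smul, smul_eq_mul] at h1
    have h2 : ∀ i : Fin m, φ (B (Sum.inl i)) = 0 := by
      intro i
      rw [φ_apply]
      exact hbker i
    simp only [h2, mul_zero, Finset.sum_const_zero, hφz, mul_one, zero_add] at h1
    exact h1
  -- the candidate
  refine ⟨fun i => B (Sum.inl i), hli, hbker, ?_, ?_⟩
  · -- spanning
    intro x hx
    have hxK : x ∈ K := by
      rw [hK, LinearMap.mem_ker, φ_apply]
      exact hx
    have h1 : (⟨x, hxK⟩ : K) ∈ Submodule.span ℤ (Set.range ⇑bK) := by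
      rw [bK.span_eq]
      trivial
    have h2 := Submodule.mem_map_of_mem (f := K.subtype) h1
    rw [Submodule.map_span] at h2
    have h3 : ⇑K.subtype '' Set.range ⇑bK = Set.range (fun i : Fin m => B (Sum.inl i)) := by
      rw [← Set.range_comp]
      ext y
      constructor
      · rintro ⟨i', rfl⟩
        refine ⟨Fin.cast hk i', ?_⟩
        show B (Sum.inl (Fin.cast hk i')) = _
        rw [hBinl]
        rfl
      · rintro ⟨i, rfl⟩
        exact ⟨Fin.cast hk.symm i, (hBinl i).symm⟩
    rw [h3] at h2
    exact h2
  · -- determinant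
    let V : Matrix (Fin m ⊕ Fin 1) (Fin (m + 1)) ℤ :=
      Matrix.of (Sum.elim (fun i => B (Sum.inl i)) (fun _ => a))
    let N : Matrix (Fin m ⊕ Fin 1) (Fin m ⊕ Fin 1) ℤ :=
      Matrix.fromBlocks 1 0 (Matrix.of fun _ i => B.repr a (Sum.inl i)) (Matrix.of fun _ _ => φ a)
    let U : Matrix (Fin m ⊕ Fin 1) (Fin (m + 1)) ℤ := Matrix.of fun s j => B s j
    have hNU : V = N * U := by
      ext s j
      rcases s with i | i1
      · rw [Matrix.mul_apply, Fintype.sum_sum_type]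
        simp [V, N, U, Matrix.one_apply, ite_mul, zero_mul, Finset.sum_ite_eq]
      · rw [Matrix.mul_apply, Fintype.sum_sum_type]
        have h1 := congrFun harepr j
        simp only [Pi.add_apply, Finset.sum_apply, Pi.smul_apply, smul_eq_mul] at h1
        have h3 : ∑ k : Fin m, N (Sum.inr i1) (Sum.inl k) * U (Sum.inl k) j
            + ∑ i1' : Fin 1, N (Sum.inr i1) (Sum.inr i1') * U (Sum.inr i1') j
            = ∑ k : Fin m, B.repr a (Sum.inl k) * B (Sum.inl k) j + φ a * z j := by
          congr 1
          rw [Fin.sum_univ_one]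
          have h4 : U (Sum.inr (0 : Fin 1)) j = z j := by
            show B (Sum.inr (0 : Fin 1)) j = z j
            rw [hBinr]
          rw [h4]
          rfl
        rw [h3, ← hcoef]
        exact h1.symm
    have hNdet : N.det = φ a := by
      rw [Matrix.det_fromBlocks_zero₁₂]
      simp [Matrix.det_fin_one]
    have hUW : U.submatrix (⇑finSumFinEquiv.symm) id = W := by
      ext r j
      simp [U, W, Bfin, Module.Basis.reindex_apply]
    have hVsq : V.submatrix (⇑finSumFinEquiv.symm) id
        = (N.submatrix (⇑finSumFinEquiv.symm) (⇑finSumFinEquiv.symm)) *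
          (U.submatrix (⇑finSumFinEquiv.symm) id) := by
      rw [Matrix.submatrix_mul_equiv N U _ finSumFinEquiv.symm _, ← hNU]
    have hVsqdet : (V.submatrix (⇑finSumFinEquiv.symm) id).det = φ a * W.det := by
      rw [hVsq, hUW, Matrix.det_mul, Matrix.det_submatrix_equiv_self, hNdet]
    let Vr : Matrix (Fin m ⊕ Fin 1) (Fin (m + 1)) ℝ := V.map Int.cast
    let G := Vr * Vrᵀ
    have hker' : ∀ i : Fin m, ∑ k, ((B (Sum.inl i) k : ℝ)) * (a k : ℝ) = 0 := by
      intro i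
      have h1 := hbker i
      have h2 : ((∑ k, a k * B (Sum.inl i) k : ℤ) : ℝ) = 0 := by
        rw [h1]
        norm_num
      push_cast at h2
      rw [← h2]
      exact Finset.sum_congr rfl fun k _ => by ring
    have hGblocks : G = Matrix.fromBlocks
        (Matrix.of fun i j : Fin m => ∑ k, ((B (Sum.inl i) k : ℝ)) * (B (Sum.inl j) k : ℝ)) 0 0
        (Matrix.of fun _ _ : Fin 1 => ∑ j, (a j : ℝ) ^ 2) := by
      ext s t
      rcases s with i | i1 <;> rcases t with j | j1
      · simp [G, Vr, V, Matrix.mul_apply, Matrix.transpose_apply]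
      · simpa [G, Vr, V, Matrix.mul_apply, Matrix.transpose_apply] using hker' i
      · have h5 : ∑ k, ((a k : ℝ)) * (B (Sum.inl j) k : ℝ) = 0 := by
          rw [← hker' j]
          exact Finset.sum_congr rfl fun k _ => by ring
        simpa [G, Vr, V, Matrix.mul_apply, Matrix.transpose_apply] using h5
      · simp [G, Vr, V, Matrix.mul_apply, Matrix.transpose_apply, pow_two]
    have hGdet1 : G.det = (Matrix.of fun i j : Fin m =>
        ∑ k, ((B (Sum.inl i) k : ℝ)) * (B (Sum.inl j) k : ℝ)).det * (∑ j, (a j : ℝ) ^ 2) := by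
      rw [hGblocks, Matrix.det_fromBlocks_zero₁₂]
      congr 1
      rw [Matrix.det_fin_one]
      rfl
    have hGsub : G.det = ((Vr.submatrix (⇑finSumFinEquiv.symm) id) *
        (Vr.submatrix (⇑finSumFinEquiv.symm) id)ᵀ).det := by
      rw [← Matrix.det_submatrix_equiv_self finSumFinEquiv.symm G]
      congr 1
    have hVsqr : (Vr.submatrix (⇑finSumFinEquiv.symm) id).det = ((φ a * W.det : ℤ) : ℝ) := by
      have h1 : Vr.submatrix (⇑finSumFinEquiv.symm) id
          = (V.submatrix (⇑finSumFinEquiv.symm) id).map Int.cast := rfl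
      rw [h1, ← hVsqdet]
      exact ((RingHom.map_det (Int.castRingHom ℝ) _)).symm
    have hGdet2 : G.det = ((φ a : ℝ)) ^ 2 := by
      rw [hGsub, Matrix.det_mul, Matrix.det_transpose, hVsqr]
      rcases hWdet2 with h | h <;> rw [h] <;> push_cast <;> ring
    have hφa : (φ a : ℝ) = ∑ j, (a j : ℝ) ^ 2 := by
      rw [φ_apply]
      push_cast
      exact Finset.sum_congr rfl fun j _ => by ring
    have hpos : 0 < ∑ j, (a j : ℝ) ^ 2 := by
      have hne : ∃ j, a j ≠ 0 := by
        by_contra hcon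
        push_neg at hcon
        have h0 : Finset.univ.gcd a = 0 := Finset.gcd_eq_zero_iff.mpr (fun j _ => hcon j)
        rw [hgcd] at h0
        norm_num at h0
      obtain ⟨j0, hj0⟩ := hne
      refine Finset.sum_pos' (fun j _ => sq_nonneg _) ⟨j0, Finset.mem_univ _, ?_⟩
      have h9 : (a j0 : ℝ) ≠ 0 := Int.cast_ne_zero.mpr hj0
      positivity
    have hfin := hGdet1
    rw [hGdet2, hφa] at hfin
    have h2 : (Matrix.of fun i j : Fin m =>
        ∑ k, ((B (Sum.inl i) k : ℝ)) * (B (Sum.inl j) k : ℝ)).det * (∑ j, (a j : ℝ) ^ 2)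
        = (∑ j, (a j : ℝ) ^ 2) * (∑ j, (a j : ℝ) ^ 2) := by
      rw [← hfin]
      ring
    exact mul_right_cancel₀ (ne_of_gt hpos) h2

/-- for `a ∈ ℤⁿ` with `gcd(a) = 1`, the lattice
`L⊥ = {x ∈ ℤⁿ : aᵀx = 0}` has rank `n − 1` and determinant `‖a‖`. -/
theorem kernel_lattice_of_vector {n : ℕ} (a : Fin n → ℤ) (hgcd : Finset.univ.gcd a = 1) :
    (∃ c : Fin (n - 1) → EuclideanSpace ℝ (Fin n), IsOrthKernelZBasis a c) ∧
    (∀ c : Fin (n - 1) → EuclideanSpace ℝ (Fin n), IsOrthKernelZBasis a c →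
      latticeDet c = Real.sqrt (∑ j, (a j : ℝ) ^ 2)) := by
  classical
  obtain ⟨m, rfl⟩ : ∃ m, n = m + 1 := by
    cases n with
    | zero =>
      exfalso
      rw [Finset.univ_eq_empty, Finset.gcd_empty] at hgcd
      norm_num at hgcd
    | succ m => exact ⟨m, rfl⟩
  obtain ⟨b, hbli, hbker, hbspan, hbdet⟩ := core a hgcd
  obtain ⟨ψ, hψ⟩ := castE_linear (m + 1)
  set c₀ : Fin m → EuclideanSpace ℝ (Fin (m + 1)) := fun i => toE (fun j => (b i j : ℝ)) with hc₀
  have hc₀eq : ∀ i, c₀ i = ψ (b i) := fun i => (hψ (b i)).symm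
  have hc₀li : LinearIndependent ℝ c₀ := by
    have h0 := hbli.map' (WithLp.linearEquiv 2 ℝ (Fin (m + 1) → ℝ)).symm.toLinearMap
      (LinearEquiv.ker _)
    exact h0
  have hc₀coord : ∀ i j, c₀ i j = (b i j : ℝ) := by
    intro i j
    simp [hc₀, toE, WithLp.equiv_symm_apply, PiLp.toLp_apply]
  have hc₀int : ∀ i, IsIntegerVec (c₀ i) := fun i j => ⟨b i j, hc₀coord i j⟩
  have hc₀ker : ∀ i, ∑ j, (a j : ℝ) * c₀ i j = 0 := by
    intro i
    have h1 : ((∑ j, a j * b i j : ℤ) : ℝ) = 0 := by rw [hbker i]; norm_num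
    push_cast at h1
    rw [← h1]
    exact Finset.sum_congr rfl fun j _ => by rw [hc₀coord]
  have hc₀span : ∀ x : Fin (m + 1) → ℤ, (∑ j, a j * x j = 0) →
      toE (fun j => (x j : ℝ)) ∈ Submodule.span ℤ (Set.range c₀) := by
    intro x hx
    have h1 := hbspan x hx
    have h2 := Submodule.mem_map_of_mem (f := ψ) h1
    rw [Submodule.map_span, ← Set.range_comp] at h2
    have h3 : (⇑ψ ∘ b) = c₀ := by
      funext i
      rw [Function.comp_apply, ← hc₀eq]
    rw [h3] at h2
    rw [← hψ x]
    exact h2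
  have hGram0 : (Matrix.of fun i j : Fin m => (⟪c₀ i, c₀ j⟫ : ℝ)).det = ∑ j, (a j : ℝ) ^ 2 := by
    rw [← hbdet]
    congr 1
    ext i j
    simp only [Matrix.of_apply, PiLp.inner_apply, hc₀coord]
    exact Finset.sum_congr rfl fun k _ => by simp [mul_comm]
  constructor
  · exact ⟨c₀, hc₀li, hc₀int, hc₀ker, hc₀span⟩
  · intro c hc
    obtain ⟨hcli, hcint, hcker, hcspan⟩ := hc
    choose x hx using hcint
    have hceq : ∀ i, c i = toE (fun j => (x i j : ℝ)) := by
      intro i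
      ext j
      rw [hx i j]
      simp [toE, WithLp.equiv_symm_apply, PiLp.toLp_apply]
    have hxker : ∀ i, ∑ j, a j * x i j = 0 := by
      intro i
      have h1 := hcker i
      have h2 : ∑ j, (a j : ℝ) * c i j = ((∑ j, a j * x i j : ℤ) : ℝ) := by
        push_cast
        exact Finset.sum_congr rfl fun j _ => by rw [hx i j]
      rw [h2] at h1
      exact_mod_cast h1
    have hc_in : ∀ i, c i ∈ Submodule.span ℤ (Set.range c₀) := by
      intro i
      rw [hceq i]
      exact hc₀span (x i) (hxker i)
    have hc₀_in : ∀ i, c₀ i ∈ Submodule.span ℤ (Set.range c) := by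
      intro i
      exact hcspan (b i) (hbker i)
    have hdeteq := gram_det_invariant c c₀ hcli hc_in hc₀_in
    unfold latticeDet
    rw [hdeteq]
    exact congrArg Real.sqrt hGram0


end
end
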